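/- Two nodes u, v of a finite directed graph G have isomorphic input trees if and only if they have isomorphic truncated input trees of depth |N_G|. -/

import Mathlib

/-- A finite directed multigraph: a node type, an edge type, and source/target maps. -/
structure FinDigraph where
  V : Type
  E : Type
  [finV : Finite V]
  [finE : Finite E]
  src : E → V
  tgt : E → V

attribute [instance] FinDigraph.finV FinDigraph.finE

namespace FinDigraph

/-- The far endpoint of a (reversed) path ending at `u`: the list `[e_k, …, e_1]`
represents the directed path `src e_k → ⋯ → tgt e_1 = u`. -/
def farEnd (G : FinDigraph) (u : G.V) : List G.E → G.V
  | [] => u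
  | e :: _ => G.src e

/-- `l = [e_k, …, e_1]` is a directed path of `G` ending at `u`. -/
def IsInPath (G : FinDigraph) (u : G.V) : List G.E → Prop
  | [] => True
  | e :: es => IsInPath G u es ∧ G.tgt e = G.farEnd u es

/-- The nodes of the input tree of `u`: all directed paths ending at `u`. -/
def InPath (G : FinDigraph) (u : G.V) : Type := {l : List G.E // G.IsInPath u l}

/-- The root of the input tree of `u` (the empty path). -/
def root (G : FinDigraph) (u : G.V) : G.InPath u := ⟨[], trivial⟩

/-- The parent of a path in the input tree (drop the farthest edge); the root is its own parent. -/
def parent (G : FinDigraph) (u : G.V) : G.InPath u → G.InPath u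
  | ⟨[], h⟩ => ⟨[], h⟩
  | ⟨_ :: es, h⟩ => ⟨es, h.1⟩

/-- Isomorphism of input trees: a bijection of paths preserving root, depth and parent. -/
def InTreeIso (G : FinDigraph) (u : G.V) (H : FinDigraph) (v : H.V) : Prop :=
  ∃ F : G.InPath u ≃ H.InPath v,
    F (G.root u) = H.root v ∧
    (∀ p, ((F p).1).length = (p.1).length) ∧
    (∀ p, F (G.parent u p) = H.parent v (F p))

/-- The reverse graph (all edges flipped). -/
def rev (G : FinDigraph) : FinDigraph :=
  { V := G.V, E := G.E, src := G.tgt, tgt := G.src }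

/-- Isomorphism of output trees = isomorphism of input trees in the reverse graphs. -/
def OutTreeIso (G : FinDigraph) (u : G.V) (H : FinDigraph) (v : H.V) : Prop :=
  InTreeIso (rev G) u (rev H) v

/-- A homomorphism of directed multigraphs. -/
structure Hom (G H : FinDigraph) where
  onV : G.V → H.V
  onE : G.E → H.E
  map_src : ∀ e, H.src (onE e) = onV (G.src e)
  map_tgt : ∀ e, H.tgt (onE e) = onV (G.tgt e)

/-- Isomorphism of directed multigraphs. -/
def IsIso (G H : FinDigraph) : Prop :=
  ∃ φ : Hom G H, Function.Bijective φ.onV ∧ Function.Bijective φ.onE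

/-- Fibration equivalence of nodes: isomorphic input trees. -/
def fibEquiv (G : FinDigraph) (u v : G.V) : Prop := InTreeIso G u G v

/-- Covering equivalence of nodes: isomorphic input trees and isomorphic output trees. -/
def covEquiv (G : FinDigraph) (u v : G.V) : Prop :=
  InTreeIso G u G v ∧ OutTreeIso G u G v

/-- Orbit equivalence: some automorphism maps one node to the other. -/
def orbitEquiv (G : FinDigraph) (u v : G.V) : Prop :=
  ∃ φ : Hom G G, Function.Bijective φ.onV ∧ Function.Bijective φ.onE ∧ φ.onV u = v

theorem inTreeIso_refl (G : FinDigraph) (u : G.V) : InTreeIso G u G u :=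
  ⟨Equiv.refl _, rfl, fun _ => rfl, fun _ => rfl⟩

theorem inTreeIso_symm {G : FinDigraph} {u : G.V} {H : FinDigraph} {v : H.V}
    (h : InTreeIso G u H v) : InTreeIso H v G u := by
  obtain ⟨F, hroot, hlen, hpar⟩ := h
  refine ⟨F.symm, ?_, ?_, ?_⟩
  · rw [← hroot, Equiv.symm_apply_apply]
  · intro p; rw [← hlen (F.symm p), Equiv.apply_symm_apply]
  · intro p
    apply F.injective
    rw [Equiv.apply_symm_apply, hpar (F.symm p), Equiv.apply_symm_apply]

theorem inTreeIso_trans {G : FinDigraph} {u : G.V} {H : FinDigraph} {v : H.V}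
    {K : FinDigraph} {w : K.V}
    (h₁ : InTreeIso G u H v) (h₂ : InTreeIso H v K w) : InTreeIso G u K w := by
  obtain ⟨F, fr, fl, fp⟩ := h₁
  obtain ⟨F', gr, gl, gp⟩ := h₂
  refine ⟨F.trans F', ?_, ?_, ?_⟩
  · simp [Equiv.trans_apply, fr, gr]
  · intro p; simp [Equiv.trans_apply, gl, fl]
  · intro p; simp [Equiv.trans_apply, fp, gp]

/-- The setoid of fibration equivalence (isomorphism of input trees). -/
def fibSetoid (G : FinDigraph) : Setoid G.V :=
  ⟨fibEquiv G, ⟨fun u => inTreeIso_refl G u, inTreeIso_symm, inTreeIso_trans⟩⟩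

/-- The minimal fibration base of `G`: nodes are the fibers (input-tree isomorphism
classes), and the edges from a fiber `C'` into a fiber `C` are the edges of `G` from
nodes of `C'` into the chosen representative of `C`. -/
def base (G : FinDigraph) : FinDigraph where
  V := Quotient (fibSetoid G)
  E := {e : G.E // G.tgt e = (Quotient.mk (fibSetoid G) (G.tgt e)).out}
  src e := Quotient.mk (fibSetoid G) (G.src e.1)
  tgt e := Quotient.mk (fibSetoid G) (G.tgt e.1)

/-- The fiber of a node, as a node of the minimal base. -/
def fibClass (G : FinDigraph) (u : G.V) : (base G).V := Quotient.mk (fibSetoid G) u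

/-- A partition (given as an equivalence relation) is balanced if any two equivalent
nodes receive the same number of edges from each class. -/
def IsBalanced (G : FinDigraph) (r : G.V → G.V → Prop) : Prop :=
  Equivalence r ∧ ∀ u v, r u v → ∀ w : G.V,
    Nat.card {e : G.E // G.tgt e = u ∧ r (G.src e) w} =
    Nat.card {e : G.E // G.tgt e = v ∧ r (G.src e) w}

/-- The multiset of states of the in-neighbors of `u` (with edge multiplicity). -/
noncomputable def inStates (G : FinDigraph) {S : Type} (x : G.V → S) (u : G.V) :
    Multiset S :=
  letI := Fintype.ofFinite G.E
  letI := Classical.decEq G.V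
  (Finset.univ.filter (fun e => G.tgt e = u)).val.map fun e => x (G.src e)

end FinDigraph

namespace FinDigraph

/-- The nodes of the depth-`k` truncated input tree of `u`: paths of length at most `k`
ending at `u`. -/
def InPathLe (G : FinDigraph) (u : G.V) (k : ℕ) : Type :=
  {l : List G.E // G.IsInPath u l ∧ l.length ≤ k}

/-- The root of the truncated input tree. -/
def rootLe (G : FinDigraph) (u : G.V) (k : ℕ) : InPathLe G u k :=
  ⟨[], trivial, Nat.zero_le k⟩

/-- The parent map of the truncated input tree. -/
def parentLe (G : FinDigraph) (u : G.V) (k : ℕ) : InPathLe G u k → InPathLe G u k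
  | ⟨[], h⟩ => ⟨[], h⟩
  | ⟨_ :: es, h⟩ => ⟨es, h.1.1, le_trans (Nat.le_succ _) h.2⟩

/-- Isomorphism of depth-`k` truncated input trees. -/
def InTreeIsoLe (G : FinDigraph) (u : G.V) (H : FinDigraph) (v : H.V) (k : ℕ) : Prop :=
  ∃ F : InPathLe G u k ≃ InPathLe H v k,
    F (rootLe G u k) = rootLe H v k ∧
    (∀ p, ((F p).1).length = (p.1).length) ∧
    (∀ p, F (parentLe G u k p) = parentLe H v k (F p))

end FinDigraph
namespace FinDigraph

variable {G H : FinDigraph}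

lemma farEnd_append (u : G.V) (e : G.E) (l : List G.E) :
    G.farEnd u (l ++ [e]) = G.farEnd (G.src e) l := by
  cases l <;> rfl

lemma isInPath_append (u : G.V) (e : G.E) (l : List G.E) :
    G.IsInPath u (l ++ [e]) ↔ G.tgt e = u ∧ G.IsInPath (G.src e) l := by
  induction l with
  | nil => simp [IsInPath, farEnd]
  | cons x xs ih =>
      show G.IsInPath u (xs ++ [e]) ∧ G.tgt x = G.farEnd u (xs ++ [e]) ↔ _
      rw [ih, farEnd_append]
      show _ ↔ G.tgt e = u ∧ (G.IsInPath (G.src e) xs ∧ G.tgt x = G.farEnd (G.src e) xs)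
      tauto

lemma parentLe_coe (u : G.V) (k : ℕ) (p : InPathLe G u k) :
    (parentLe G u k p).1 = p.1.tail := by
  obtain ⟨l, h⟩ := p; cases l <;> rfl

lemma parent_coe (u : G.V) (p : InPath G u) :
    (G.parent u p).1 = p.1.tail := by
  obtain ⟨l, h⟩ := p; cases l <;> rfl

lemma parentLe_iterate (u : G.V) (k m : ℕ) (p : InPathLe G u k) :
    ((parentLe G u k)^[m] p).1 = p.1.drop m := by
  induction m generalizing p with
  | zero => simp
  | succ m ih =>
      rw [Function.iterate_succ_apply, ih, parentLe_coe, ← List.drop_one,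
        List.drop_drop, Nat.add_comm]

lemma inTreeIsoLe_refl (u : G.V) (k : ℕ) : InTreeIsoLe G u G u k :=
  ⟨Equiv.refl _, rfl, fun _ => rfl, fun _ => rfl⟩

lemma inTreeIsoLe_symm {u : G.V} {v : H.V} {k : ℕ}
    (h : InTreeIsoLe G u H v k) : InTreeIsoLe H v G u k := by
  obtain ⟨F, hroot, hlen, hpar⟩ := h
  refine ⟨F.symm, ?_, ?_, ?_⟩
  · rw [← hroot, Equiv.symm_apply_apply]
  · intro p; rw [← hlen (F.symm p), Equiv.apply_symm_apply]
  · intro p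
    apply F.injective
    rw [Equiv.apply_symm_apply, hpar (F.symm p), Equiv.apply_symm_apply]

lemma inTreeIsoLe_trans {u : G.V} {v : H.V} {K : FinDigraph} {w : K.V} {k : ℕ}
    (h₁ : InTreeIsoLe G u H v k) (h₂ : InTreeIsoLe H v K w k) : InTreeIsoLe G u K w k := by
  obtain ⟨F, fr, fl, fp⟩ := h₁
  obtain ⟨F', gr, gl, gp⟩ := h₂
  refine ⟨F.trans F', ?_, ?_, ?_⟩
  · simp [Equiv.trans_apply, fr, gr]
  · intro p; simp [Equiv.trans_apply, gl, fl]
  · intro p; simp [Equiv.trans_apply, fp, gp]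

end FinDigraph
namespace FinDigraph

variable {G H : FinDigraph}

lemma inTreeIsoLe_mono {u : G.V} {v : H.V} {k k' : ℕ} (hk : k ≤ k')
    (h : InTreeIsoLe G u H v k') : InTreeIsoLe G u H v k := by
  obtain ⟨F, hroot, hlen, hpar⟩ := h
  have hlen' : ∀ q, ((F.symm q).1).length = (q.1).length := by
    intro q; rw [← hlen (F.symm q), Equiv.apply_symm_apply]
  let i : InPathLe G u k → InPathLe G u k' := fun p => ⟨p.1, p.2.1, le_trans p.2.2 hk⟩
  let j : InPathLe H v k → InPathLe H v k' := fun p => ⟨p.1, p.2.1, le_trans p.2.2 hk⟩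
  let f : InPathLe G u k → InPathLe H v k :=
    fun p => ⟨(F (i p)).1, (F (i p)).2.1, by rw [hlen]; exact p.2.2⟩
  let g : InPathLe H v k → InPathLe G u k :=
    fun q => ⟨(F.symm (j q)).1, (F.symm (j q)).2.1, by rw [hlen']; exact q.2.2⟩
  refine ⟨⟨f, g, ?_, ?_⟩, ?_, ?_, ?_⟩
  · intro p
    apply Subtype.ext
    have h1 : j (f p) = F (i p) := Subtype.ext rfl
    show (F.symm (j (f p))).1 = p.1
    rw [h1, Equiv.symm_apply_apply]
  · intro q
    apply Subtype.ext
    have h1 : i (g q) = F.symm (j q) := Subtype.ext rfl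
    show (F (i (g q))).1 = q.1
    rw [h1, Equiv.apply_symm_apply]
  · apply Subtype.ext
    have h1 : i (rootLe G u k) = rootLe G u k' := Subtype.ext rfl
    show (F (i (rootLe G u k))).1 = []
    rw [h1, hroot]; rfl
  · intro p; exact hlen (i p)
  · intro p
    apply Subtype.ext
    have h2 : i (parentLe G u k p) = parentLe G u k' (i p) :=
      Subtype.ext (by rw [parentLe_coe, parentLe_coe])
    show (F (i (parentLe G u k p))).1 = (parentLe H v k (f p)).1
    rw [h2, hpar, parentLe_coe, parentLe_coe]

lemma inTreeIso_to_le {u : G.V} {v : H.V} (k : ℕ)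
    (h : InTreeIso G u H v) : InTreeIsoLe G u H v k := by
  obtain ⟨F, hroot, hlen, hpar⟩ := h
  have hlen' : ∀ q, ((F.symm q).1).length = (q.1).length := by
    intro q; rw [← hlen (F.symm q), Equiv.apply_symm_apply]
  let i : InPathLe G u k → InPath G u := fun p => ⟨p.1, p.2.1⟩
  let j : InPathLe H v k → InPath H v := fun p => ⟨p.1, p.2.1⟩
  let f : InPathLe G u k → InPathLe H v k :=
    fun p => ⟨(F (i p)).1, (F (i p)).2, by rw [hlen]; exact p.2.2⟩
  let g : InPathLe H v k → InPathLe G u k :=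
    fun q => ⟨(F.symm (j q)).1, (F.symm (j q)).2, by rw [hlen']; exact q.2.2⟩
  refine ⟨⟨f, g, ?_, ?_⟩, ?_, ?_, ?_⟩
  · intro p
    apply Subtype.ext
    have h1 : j (f p) = F (i p) := Subtype.ext rfl
    show (F.symm (j (f p))).1 = p.1
    rw [h1, Equiv.symm_apply_apply]
  · intro q
    apply Subtype.ext
    have h1 : i (g q) = F.symm (j q) := Subtype.ext rfl
    show (F (i (g q))).1 = q.1
    rw [h1, Equiv.apply_symm_apply]
  · apply Subtype.ext
    have h1 : i (rootLe G u k) = G.root u := Subtype.ext rfl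
    show (F (i (rootLe G u k))).1 = []
    rw [h1, hroot]; rfl
  · intro p; exact hlen (i p)
  · intro p
    apply Subtype.ext
    have h2 : i (parentLe G u k p) = G.parent u (i p) :=
      Subtype.ext (by rw [parentLe_coe, parent_coe])
    show (F (i (parentLe G u k p))).1 = (parentLe H v k (f p)).1
    rw [h2, hpar, parentLe_coe, parent_coe]

end FinDigraph
namespace FinDigraph

variable {G H : FinDigraph}

lemma list_aux {α : Type _} (L : List α) (x : α) (m : ℕ)
    (h1 : L.length = m + 1) (h2 : L.drop m = [x]) :
    L = L.dropLast ++ [x] ∧ L.dropLast.length = m := by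
  have ht : L.dropLast = L.take m := by rw [List.dropLast_eq_take, h1]; simp
  constructor
  · rw [ht]; conv_lhs => rw [← List.take_append_drop m L]
    rw [h2]
  · rw [ht, List.length_take, h1]; omega

lemma iterate_comm {u : G.V} {v : H.V} {k : ℕ} (F : InPathLe G u k ≃ InPathLe H v k)
    (hpar : ∀ p, F (parentLe G u k p) = parentLe H v k (F p)) (m : ℕ)
    (p : InPathLe G u k) :
    F ((parentLe G u k)^[m] p) = (parentLe H v k)^[m] (F p) := by
  induction m with
  | zero => rfl
  | succ m ih =>
      rw [Function.iterate_succ_apply', Function.iterate_succ_apply', hpar, ih]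

lemma sub_aux {u : G.V} {v : H.V} {k : ℕ} (F : InPathLe G u (k+1) ≃ InPathLe H v (k+1))
    (hlen : ∀ p, ((F p).1).length = (p.1).length)
    (hpar : ∀ p, F (parentLe G u (k+1) p) = parentLe H v (k+1) (F p))
    {e : G.E} {e' : H.E} (he : G.tgt e = u)
    (hee : ∀ h1 h2, (F ⟨[e], h1, h2⟩).1 = [e'])
    (p : InPathLe G u (k+1)) (l : List G.E) (hp : p.1 = l ++ [e]) :
    (F p).1 = ((F p).1).dropLast ++ [e'] ∧ ((F p).1).dropLast.length = l.length := by
  have h3' : ((parentLe G u (k+1))^[l.length] p).1 = [e] := by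
    rw [parentLe_iterate, hp, List.drop_left]
  have hq : (parentLe G u (k+1))^[l.length] p
      = (⟨[e], ⟨trivial, he⟩, by simp⟩ : InPathLe G u (k+1)) := Subtype.ext h3'
  have h4 : (F p).1.drop l.length = [e'] := by
    rw [← parentLe_iterate v (k+1) l.length (F p), ← iterate_comm F hpar, hq]
    exact hee ⟨trivial, he⟩ (by simp)
  have h1 : (F p).1.length = l.length + 1 := by
    rw [hlen, hp]; simp
  exact list_aux _ _ _ h1 h4

lemma decompose {u : G.V} {v : H.V} {k : ℕ} (h : InTreeIsoLe G u H v (k+1)) :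
    ∃ β : {e : G.E // G.tgt e = u} ≃ {e' : H.E // H.tgt e' = v},
      ∀ e, InTreeIsoLe G (G.src e.1) H (H.src (β e).1) k := by
  classical
  obtain ⟨F, hroot, hlen, hpar⟩ := h
  have hlen' : ∀ q, ((F.symm q).1).length = (q.1).length := by
    intro q; rw [← hlen (F.symm q), Equiv.apply_symm_apply]
  have hpar' : ∀ q, F.symm (parentLe H v (k+1) q) = parentLe G u (k+1) (F.symm q) := by
    intro q
    apply F.injective
    rw [Equiv.apply_symm_apply, hpar (F.symm q), Equiv.apply_symm_apply]
  -- singleton paths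
  let sing : {e : G.E // G.tgt e = u} → InPathLe G u (k+1) :=
    fun e => ⟨[e.1], ⟨trivial, e.2⟩, by simp⟩
  let sing' : {e' : H.E // H.tgt e' = v} → InPathLe H v (k+1) :=
    fun e' => ⟨[e'.1], ⟨trivial, e'.2⟩, by simp⟩
  have hsing' : ∀ p : InPathLe H v (k+1), p.1.length = 1 → ∃ e', p = sing' e' := by
    rintro ⟨l, hl, hlk⟩ h1
    cases l with
    | nil => simp at h1
    | cons x xs =>
        cases xs with
        | nil => exact ⟨⟨x, hl.2⟩, Subtype.ext rfl⟩
        | cons y ys => simp at h1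
  have hsing : ∀ p : InPathLe G u (k+1), p.1.length = 1 → ∃ e, p = sing e := by
    rintro ⟨l, hl, hlk⟩ h1
    cases l with
    | nil => simp at h1
    | cons x xs =>
        cases xs with
        | nil => exact ⟨⟨x, hl.2⟩, Subtype.ext rfl⟩
        | cons y ys => simp at h1
  choose β0 hβ0 using fun e => hsing' (F (sing e)) (by rw [hlen]; rfl)
  choose β0' hβ0' using fun e' => hsing (F.symm (sing' e')) (by rw [hlen']; rfl)
  have hsi : Function.Injective sing := by
    intro a b hab
    apply Subtype.ext
    have : [a.1] = [b.1] := congrArg Subtype.val hab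
    simpa using this
  have hsi' : Function.Injective sing' := by
    intro a b hab
    apply Subtype.ext
    have : [a.1] = [b.1] := congrArg Subtype.val hab
    simpa using this
  have hββ' : ∀ e, β0' (β0 e) = e := by
    intro e
    apply hsi
    rw [← hβ0', ← hβ0, Equiv.symm_apply_apply]
  have hβ'β : ∀ e', β0 (β0' e') = e' := by
    intro e'
    apply hsi'
    rw [← hβ0, ← hβ0', Equiv.apply_symm_apply]
  refine ⟨⟨β0, β0', hββ', hβ'β⟩, ?_⟩
  intro e
  show InTreeIsoLe G (G.src e.1) H (H.src (β0 e).1) k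
  let e' := β0 e
  have he'def : e' = β0 e := rfl
  -- key equalities for sub_aux
  have heeF : ∀ h1 h2, (F ⟨[e.1], h1, h2⟩).1 = [e'.1] := by
    intro h1 h2
    have : (⟨[e.1], h1, h2⟩ : InPathLe G u (k+1)) = sing e := Subtype.ext rfl
    rw [this, hβ0 e]
  have heeF' : ∀ h1 h2, (F.symm ⟨[e'.1], h1, h2⟩).1 = [e.1] := by
    intro h1 h2
    have : (⟨[e'.1], h1, h2⟩ : InPathLe H v (k+1)) = sing' e' := Subtype.ext rfl
    rw [this, hβ0' e', he'def, hββ' e]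
  -- the subtree maps
  have memG : ∀ l : InPathLe G (G.src e.1) k,
      G.IsInPath u (l.1 ++ [e.1]) ∧ (l.1 ++ [e.1]).length ≤ k + 1 := by
    intro l
    refine ⟨(isInPath_append u e.1 l.1).2 ⟨e.2, l.2.1⟩, ?_⟩
    have hk2 := l.2.2
    simp only [List.length_append, List.length_singleton]
    omega
  have memH : ∀ l : InPathLe H (H.src e'.1) k,
      H.IsInPath v (l.1 ++ [e'.1]) ∧ (l.1 ++ [e'.1]).length ≤ k + 1 := by
    intro l
    refine ⟨(isInPath_append v e'.1 l.1).2 ⟨e'.2, l.2.1⟩, ?_⟩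
    have hk2 := l.2.2
    simp only [List.length_append, List.length_singleton]
    omega
  let ext : InPathLe G (G.src e.1) k → InPathLe G u (k+1) :=
    fun l => ⟨l.1 ++ [e.1], memG l⟩
  let ext' : InPathLe H (H.src e'.1) k → InPathLe H v (k+1) :=
    fun l => ⟨l.1 ++ [e'.1], memH l⟩
  have subF := fun (l : InPathLe G (G.src e.1) k) =>
    sub_aux F hlen hpar e.2 heeF (ext l) l.1 rfl
  have subF' := fun (l : InPathLe H (H.src e'.1) k) =>
    sub_aux F.symm hlen' hpar' e'.2 heeF' (ext' l) l.1 rfl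
  let f : InPathLe G (G.src e.1) k → InPathLe H (H.src e'.1) k := fun l =>
    ⟨((F (ext l)).1).dropLast, by
      have h1 := (subF l).1
      have h2 := (F (ext l)).2.1
      rw [h1] at h2
      exact ((isInPath_append v e'.1 _).1 h2).2, by
      rw [(subF l).2]; exact l.2.2⟩
  let g : InPathLe H (H.src e'.1) k → InPathLe G (G.src e.1) k := fun l =>
    ⟨((F.symm (ext' l)).1).dropLast, by
      have h1 := (subF' l).1
      have h2 := (F.symm (ext' l)).2.1
      rw [h1] at h2
      exact ((isInPath_append u e.1 _).1 h2).2, by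
      rw [(subF' l).2]; exact l.2.2⟩
  have hextf : ∀ l, ext' (f l) = F (ext l) := by
    intro l
    apply Subtype.ext
    show ((F (ext l)).1).dropLast ++ [e'.1] = (F (ext l)).1
    exact ((subF l).1).symm
  have hextg : ∀ l, ext (g l) = F.symm (ext' l) := by
    intro l
    apply Subtype.ext
    show ((F.symm (ext' l)).1).dropLast ++ [e.1] = (F.symm (ext' l)).1
    exact ((subF' l).1).symm
  refine ⟨⟨f, g, ?_, ?_⟩, ?_, ?_, ?_⟩
  · intro l
    apply Subtype.ext
    show ((F.symm (ext' (f l))).1).dropLast = l.1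
    rw [hextf, Equiv.symm_apply_apply]
    show (l.1 ++ [e.1]).dropLast = l.1
    simp
  · intro l
    apply Subtype.ext
    show ((F (ext (g l))).1).dropLast = l.1
    rw [hextg, Equiv.apply_symm_apply]
    show (l.1 ++ [e'.1]).dropLast = l.1
    simp
  · apply Subtype.ext
    show ((F (ext (rootLe G (G.src e.1) k))).1).dropLast = []
    have : ext (rootLe G (G.src e.1) k) = sing e := Subtype.ext rfl
    rw [this, hβ0 e]
    rfl
  · intro l
    exact (subF l).2
  · intro l
    apply Subtype.ext
    obtain ⟨l0, hl01, hl02⟩ := l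
    cases l0 with
    | nil =>
        have h0 : parentLe G (G.src e.1) k ⟨[], hl01, hl02⟩ = ⟨[], hl01, hl02⟩ := rfl
        rw [h0]
        show (f _).1 = (parentLe H (H.src e'.1) k (f _)).1
        rw [parentLe_coe]
        have hroot0 : (f ⟨[], hl01, hl02⟩).1 = [] := by
          show ((F (ext ⟨[], hl01, hl02⟩)).1).dropLast = []
          have : ext ⟨[], hl01, hl02⟩ = sing e := Subtype.ext rfl
          rw [this, hβ0 e]
          rfl
        rw [hroot0]
        rfl
    | cons x xs =>
        show ((F (ext (parentLe G (G.src e.1) k ⟨x :: xs, hl01, hl02⟩))).1).dropLast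
            = (parentLe H (H.src e'.1) k (f ⟨x :: xs, hl01, hl02⟩)).1
        have hA : ext (parentLe G (G.src e.1) k ⟨x :: xs, hl01, hl02⟩)
            = parentLe G u (k+1) (ext ⟨x :: xs, hl01, hl02⟩) := by
          apply Subtype.ext
          rw [parentLe_coe]
          show (parentLe G (G.src e.1) k ⟨x :: xs, hl01, hl02⟩).1 ++ [e.1]
              = ((x :: xs) ++ [e.1]).tail
          rfl
        rw [hA, hpar, parentLe_coe, parentLe_coe]
        show ((F (ext ⟨x :: xs, hl01, hl02⟩)).1).tail.dropLast
            = ((F (ext ⟨x :: xs, hl01, hl02⟩)).1).dropLast.tail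
        rw [List.tail_dropLast]

end FinDigraph
namespace FinDigraph

lemma exists_stable (G : FinDigraph) (u0 : G.V) :
    ∃ K, K ≤ Nat.card G.V ∧
      ∀ w w' : G.V, InTreeIsoLe G w G w' K → InTreeIsoLe G w G w' (K + 1) := by
  classical
  haveI : Nonempty G.V := ⟨u0⟩
  set n := Nat.card G.V with hn
  let s : ℕ → Setoid G.V := fun k =>
    ⟨fun w w' => InTreeIsoLe G w G w' k,
      ⟨fun w => inTreeIsoLe_refl w k, inTreeIsoLe_symm, inTreeIsoLe_trans⟩⟩
  let q : ∀ k, Quotient (s (k + 1)) → Quotient (s k) := fun k =>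
    Quotient.map id (fun a b hab => inTreeIsoLe_mono (Nat.le_succ k) hab)
  have hqmk : ∀ k (w : G.V), q k (Quotient.mk (s (k+1)) w) = Quotient.mk (s k) w :=
    fun k w => rfl
  have hqsur : ∀ k, Function.Surjective (q k) := by
    intro k x
    obtain ⟨w, hw⟩ := Quotient.exists_rep x
    exact ⟨Quotient.mk (s (k+1)) w, by rw [hqmk, hw]⟩
  let f : ℕ → ℕ := fun k => Nat.card (Quotient (s k))
  have hmono : ∀ k, f k ≤ f (k + 1) := fun k =>
    Nat.card_le_card_of_surjective (q k) (hqsur k)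
  have hub : ∀ k, f k ≤ n := by
    intro k
    rw [hn]
    exact Nat.card_le_card_of_surjective (Quotient.mk (s k))
      (fun x => Quotient.exists_rep x)
  have hpos : ∀ k, 1 ≤ f k := fun k =>
    @Nat.card_pos _ ⟨Quotient.mk (s k) u0⟩ _
  have hstep : ∀ K, f (K + 1) = f K →
      ∀ w w' : G.V, InTreeIsoLe G w G w' K → InTreeIsoLe G w G w' (K + 1) := by
    intro K hf w w' hww
    have hbij : Function.Bijective (q K) :=
      (Nat.bijective_iff_surjective_and_card (q K)).2 ⟨hqsur K, hf⟩
    have h1 : q K (Quotient.mk (s (K+1)) w) = q K (Quotient.mk (s (K+1)) w') := by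
      rw [hqmk, hqmk]
      exact Quotient.sound hww
    exact Quotient.exact (hbij.1 h1)
  by_contra hcon
  push_neg at hcon
  have hlt : ∀ K, K ≤ n → f K < f (K + 1) := by
    intro K hK
    rcases Nat.lt_or_ge (f K) (f (K + 1)) with h | h
    · exact h
    · exfalso
      have hf : f (K + 1) = f K := le_antisymm h (hmono K)
      obtain ⟨w, w', hww, hnot⟩ := hcon K hK
      exact hnot (hstep K hf w w' hww)
  have key : ∀ m, m ≤ n → m + 1 ≤ f m := by
    intro m
    induction m with
    | zero => intro _; exact hpos 0
    | succ m ih =>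
        intro hm
        have h1 : m ≤ n := le_trans (Nat.le_succ m) hm
        have h2 := hlt m h1
        have h3 := ih h1
        omega
  have := key n le_rfl
  have := hub n
  omega

end FinDigraph
namespace FinDigraph

section Transfer

variable {G : FinDigraph} {R : G.V → G.V → Prop}

lemma B_symm_val (B : ∀ w w', R w w' → ({e : G.E // G.tgt e = w} ≃ {e : G.E // G.tgt e = w'}))
    {w1 w2 w' : G.V} (hw : w1 = w2) (h1 : R w1 w') (h2 : R w2 w')
    (x : {e : G.E // G.tgt e = w2}) (y : {e : G.E // G.tgt e = w'})
    (hy : y.1 = ((B w2 w' h2) x).1) :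
    (((B w1 w' h1).symm) y).1 = x.1 := by
  subst hw
  have hxy : y = (B w1 w' h1) x := Subtype.ext hy
  rw [hxy, Equiv.symm_apply_apply]

lemma B_val (B : ∀ w w', R w w' → ({e : G.E // G.tgt e = w} ≃ {e : G.E // G.tgt e = w'}))
    {w w1' w2' : G.V} (hw : w1' = w2') (h1 : R w w1') (h2 : R w w2')
    (y : {e : G.E // G.tgt e = w2'}) (x : {e : G.E // G.tgt e = w})
    (hx : x.1 = (((B w w2' h2).symm) y).1) :
    ((B w w1' h1) x).1 = y.1 := by
  subst hw
  have hxy : x = (B w w1' h1).symm y := Subtype.ext hx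
  rw [hxy, Equiv.apply_symm_apply]

def transferF (G : FinDigraph) (R : G.V → G.V → Prop)
    (B : ∀ w w', R w w' → ({e : G.E // G.tgt e = w} ≃ {e : G.E // G.tgt e = w'}))
    (hB : ∀ w w' (h : R w w') e, R (G.src e.1) (G.src ((B w w' h) e).1))
    (u v : G.V) :
    (l : List G.E) → G.IsInPath u l → R u v →
      {l' : List G.E // G.IsInPath v l' ∧ l'.length = l.length ∧
        R (G.farEnd u l) (G.farEnd v l')}
  | [], _, h => ⟨[], trivial, rfl, h⟩
  | e :: es, hl, h =>
      let prev := transferF G R B hB u v es hl.1 h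
      let e' := B (G.farEnd u es) (G.farEnd v prev.1) prev.2.2.2 ⟨e, hl.2⟩
      ⟨e'.1 :: prev.1, ⟨prev.2.1, e'.2⟩, by simp [prev.2.2.1], by exact hB _ _ prev.2.2.2 ⟨e, hl.2⟩⟩

def transferB (G : FinDigraph) (R : G.V → G.V → Prop)
    (B : ∀ w w', R w w' → ({e : G.E // G.tgt e = w} ≃ {e : G.E // G.tgt e = w'}))
    (hB : ∀ w w' (h : R w w') e, R (G.src e.1) (G.src ((B w w' h) e).1))
    (u v : G.V) :
    (l' : List G.E) → G.IsInPath v l' → R u v →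
      {l : List G.E // G.IsInPath u l ∧ l.length = l'.length ∧
        R (G.farEnd u l) (G.farEnd v l')}
  | [], _, h => ⟨[], trivial, rfl, h⟩
  | e' :: es', hl, h =>
      let prev := transferB G R B hB u v es' hl.1 h
      let e := (B (G.farEnd u prev.1) (G.farEnd v es') prev.2.2.2).symm ⟨e', hl.2⟩
      ⟨e.1 :: prev.1, ⟨prev.2.1, e.2⟩, by simp [prev.2.2.1], by
        have h5 := hB _ _ prev.2.2.2 e
        rwa [Equiv.apply_symm_apply] at h5⟩

variable (B : ∀ w w', R w w' → ({e : G.E // G.tgt e = w} ≃ {e : G.E // G.tgt e = w'}))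
    (hB : ∀ w w' (h : R w w') e, R (G.src e.1) (G.src ((B w w' h) e).1))

lemma transferF_transferB (u v : G.V) :
    ∀ (l : List G.E) (hl : G.IsInPath u l) (h : R u v) (l2 : List G.E)
      (hl2 : G.IsInPath v l2) (h2 : R u v)
      (heq : l2 = (transferF G R B hB u v l hl h).1),
      (transferB G R B hB u v l2 hl2 h2).1 = l := by
  intro l
  induction l with
  | nil =>
      intro hl h l2 hl2 h2 heq
      have : l2 = [] := heq
      subst this
      rfl
  | cons e es ih =>
      intro hl h l2 hl2 h2 heq
      have hTF : (transferF G R B hB u v (e :: es) hl h).1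
          = (B (G.farEnd u es) (G.farEnd v (transferF G R B hB u v es hl.1 h).1)
              (transferF G R B hB u v es hl.1 h).2.2.2 ⟨e, hl.2⟩).1
            :: (transferF G R B hB u v es hl.1 h).1 := rfl
      rw [hTF] at heq
      subst heq
      have hIH := ih hl.1 h (transferF G R B hB u v es hl.1 h).1 hl2.1 h2 rfl
      show ((B _ _ _).symm ⟨_, hl2.2⟩).1
          :: (transferB G R B hB u v (transferF G R B hB u v es hl.1 h).1 hl2.1 h2).1
          = e :: es
      simp only [List.cons.injEq]
      refine ⟨?_, hIH⟩
      exact B_symm_val B (congrArg (G.farEnd u) hIH)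
        (transferB G R B hB u v (transferF G R B hB u v es hl.1 h).1 hl2.1 h2).2.2.2
        (transferF G R B hB u v es hl.1 h).2.2.2 ⟨e, hl.2⟩ _ rfl

lemma transferB_transferF (u v : G.V) :
    ∀ (l' : List G.E) (hl' : G.IsInPath v l') (h : R u v) (l2 : List G.E)
      (hl2 : G.IsInPath u l2) (h2 : R u v)
      (heq : l2 = (transferB G R B hB u v l' hl' h).1),
      (transferF G R B hB u v l2 hl2 h2).1 = l' := by
  intro l'
  induction l' with
  | nil =>
      intro hl' h l2 hl2 h2 heq
      have : l2 = [] := heq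
      subst this
      rfl
  | cons e' es' ih =>
      intro hl' h l2 hl2 h2 heq
      have hTB : (transferB G R B hB u v (e' :: es') hl' h).1
          = ((B (G.farEnd u (transferB G R B hB u v es' hl'.1 h).1) (G.farEnd v es')
              (transferB G R B hB u v es' hl'.1 h).2.2.2).symm ⟨e', hl'.2⟩).1
            :: (transferB G R B hB u v es' hl'.1 h).1 := rfl
      rw [hTB] at heq
      subst heq
      have hIH := ih hl'.1 h (transferB G R B hB u v es' hl'.1 h).1 hl2.1 h2 rfl
      show (B _ _ _ ⟨_, hl2.2⟩).1
          :: (transferF G R B hB u v (transferB G R B hB u v es' hl'.1 h).1 hl2.1 h2).1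
          = e' :: es'
      simp only [List.cons.injEq]
      refine ⟨?_, hIH⟩
      exact B_val B (congrArg (G.farEnd v) hIH)
        (transferF G R B hB u v (transferB G R B hB u v es' hl'.1 h).1 hl2.1 h2).2.2.2
        (transferB G R B hB u v es' hl'.1 h).2.2.2 ⟨e', hl'.2⟩ _ rfl

include B hB in
lemma bisim_to_iso {u v : G.V} (h : R u v) : InTreeIso G u G v := by
  let f : InPath G u → InPath G v := fun p =>
    ⟨(transferF G R B hB u v p.1 p.2 h).1, (transferF G R B hB u v p.1 p.2 h).2.1⟩
  let g : InPath G v → InPath G u := fun q =>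
    ⟨(transferB G R B hB u v q.1 q.2 h).1, (transferB G R B hB u v q.1 q.2 h).2.1⟩
  refine ⟨⟨f, g, ?_, ?_⟩, ?_, ?_, ?_⟩
  · intro p
    exact Subtype.ext (transferF_transferB B hB u v p.1 p.2 h _ _ h rfl)
  · intro q
    exact Subtype.ext (transferB_transferF B hB u v q.1 q.2 h _ _ h rfl)
  · exact Subtype.ext rfl
  · intro p
    exact (transferF G R B hB u v p.1 p.2 h).2.2.1
  · intro p
    apply Subtype.ext
    obtain ⟨l, hl⟩ := p
    cases l with
    | nil => rfl
    | cons e es =>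
        show (transferF G R B hB u v es hl.1 h).1 = ((G.parent v (f ⟨e :: es, hl⟩)).1)
        rw [parent_coe]
        have hTF : (f ⟨e :: es, hl⟩).1
            = (B (G.farEnd u es) (G.farEnd v (transferF G R B hB u v es hl.1 h).1)
                (transferF G R B hB u v es hl.1 h).2.2.2 ⟨e, hl.2⟩).1
              :: (transferF G R B hB u v es hl.1 h).1 := rfl
        rw [hTF]
        rfl

end Transfer

end FinDigraph

/-- two nodes of a finite directed graph `G` have isomorphic input trees
iff they have isomorphic truncated input trees of depth `|N_G|`. -/
theorem inTreeIso_iff_truncated (G : FinDigraph) (u v : G.V) :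
    FinDigraph.InTreeIso G u G v ↔
    FinDigraph.InTreeIsoLe G u G v (Nat.card G.V) := by
  constructor
  · intro h
    exact FinDigraph.inTreeIso_to_le _ h
  · intro h
    obtain ⟨K, hK, hst⟩ := FinDigraph.exists_stable G u
    have hR : FinDigraph.InTreeIsoLe G u G v K := FinDigraph.inTreeIsoLe_mono hK h
    have bisim := fun w w' (hw : FinDigraph.InTreeIsoLe G w G w' K) =>
      FinDigraph.decompose (hst w w' hw)
    choose B hB using bisim
    exact FinDigraph.bisim_to_iso B hB hR
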